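/- The set ℝ − ℚ of real numbers that are not rational, regarded as a subset of the constant polynomials in ℝ[z], is not Diophantine over ℝ[z]. -/

import Mathlib

/-- A set `X ⊆ R^n` is *Diophantine* over `R` if there are finitely many polynomials
`F₁, …, F_r ∈ R[x₁,…,x_n,y₁,…,y_m]` such that `X` is the set of `a ∈ R^n` for which the
system `F_j(a, b) = 0` (for all `j`) has a solution `b ∈ R^m`. -/
def IsDiophantine {R : Type*} [CommRing R] {n : ℕ} (X : Set (Fin n → R)) : Prop :=
  ∃ (m r : ℕ) (F : Fin r → MvPolynomial (Fin n ⊕ Fin m) R),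
    ∀ a : Fin n → R, a ∈ X ↔
      ∃ b : Fin m → R, ∀ j : Fin r, MvPolynomial.eval (Sum.elim a b) (F j) = 0

/-- A set `X ⊆ R` is Diophantine over `R` (one-variable case of `IsDiophantine`). -/
def IsDiophantine1 {R : Type*} [CommRing R] (X : Set R) : Prop :=
  ∃ (m r : ℕ) (F : Fin r → MvPolynomial (Fin 1 ⊕ Fin m) R),
    ∀ a : R, a ∈ X ↔
      ∃ b : Fin m → R, ∀ j : Fin r, MvPolynomial.eval (Sum.elim (fun _ => a) b) (F j) = 0

/-- A set `X ⊆ R²` is Diophantine over `R` (two-variable case of `IsDiophantine`). -/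
def IsDiophantine2 {R : Type*} [CommRing R] (X : Set (R × R)) : Prop :=
  ∃ (m r : ℕ) (F : Fin r → MvPolynomial (Fin 2 ⊕ Fin m) R),
    ∀ a : R × R, a ∈ X ↔
      ∃ b : Fin m → R, ∀ j : Fin r, MvPolynomial.eval (Sum.elim ![a.1, a.2] b) (F j) = 0

open Polynomial Set

private lemma bridge_aux {σ : Type*} (F : MvPolynomial σ (Polynomial ℝ))
    (v : σ → Polynomial ℝ) (t : ℝ) :
    Polynomial.eval t (MvPolynomial.eval v F) =
      MvPolynomial.eval (fun i => Polynomial.eval t (v i))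
        (MvPolynomial.map (Polynomial.evalRingHom t) F) := by
  have h := MvPolynomial.eval₂_comp_left (Polynomial.evalRingHom t) (RingHom.id _) v F
  rw [MvPolynomial.eval₂_id, RingHom.comp_id, MvPolynomial.eval₂_eq_eval_map] at h
  simpa [Function.comp_def] using h

private lemma real_sub_rat_aux (m r : ℕ) (F : Fin r → MvPolynomial (Fin 1 ⊕ Fin m) (Polynomial ℝ))
    (hF : ∀ a : Polynomial ℝ,
      a ∈ {f : Polynomial ℝ | ∃ a : ℝ, f = Polynomial.C a ∧ ¬ ∃ q : ℚ, a = (q : ℝ)} ↔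
      ∃ b : Fin m → Polynomial ℝ, ∀ j : Fin r,
        MvPolynomial.eval (Sum.elim (fun _ => a) b) (F j) = 0) : False := by
  classical
  -- the real set of irrationals
  set X : Set ℝ := {a : ℝ | ¬ ∃ q : ℚ, a = (q : ℝ)} with hXdef
  -- key equivalence: membership via finite-dimensional real solutions
  have key : ∀ a : ℝ, a ∈ X ↔ ∃ d : ℕ, ∃ c : Fin m → Fin (d + 1) → ℝ,
      ∀ j : Fin r, ∀ q : ℚ,
        MvPolynomial.eval
          (Sum.elim (fun _ => a) (fun i => ∑ k : Fin (d + 1), c i k * (q : ℝ) ^ (k : ℕ)))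
          (MvPolynomial.map (Polynomial.evalRingHom (q : ℝ)) (F j)) = 0 := by
    intro a
    have hmem : a ∈ X ↔ (Polynomial.C a) ∈
        {f : Polynomial ℝ | ∃ a : ℝ, f = Polynomial.C a ∧ ¬ ∃ q : ℚ, a = (q : ℝ)} := by
      constructor
      · intro h; exact ⟨a, rfl, h⟩
      · rintro ⟨a', ha', h⟩
        rwa [Polynomial.C_injective ha']
    rw [hmem, hF]
    constructor
    · rintro ⟨b, hb⟩
      set d : ℕ := Finset.univ.sup (fun i => (b i).natDegree) with hd
      refine ⟨d, fun i k => (b i).coeff k, fun j q => ?_⟩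
      have hbi : ∀ i : Fin m, (∑ k : Fin (d + 1), (b i).coeff k * (q : ℝ) ^ (k : ℕ))
          = Polynomial.eval (q : ℝ) (b i) := by
        intro i
        rw [Fin.sum_univ_eq_sum_range (fun k => (b i).coeff k * (q : ℝ) ^ k) (d + 1)]
        exact (Polynomial.eval_eq_sum_range' (n := d + 1)
          (Nat.lt_succ_of_le (Finset.le_sup (f := fun i => (b i).natDegree) (Finset.mem_univ i)))
          (q : ℝ)).symm
      have := bridge_aux (F j) (Sum.elim (fun _ => Polynomial.C a) b) (q : ℝ)
      rw [hb j] at this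
      simp only [Polynomial.eval_zero] at this
      rw [show (Sum.elim (fun _ => a)
            (fun i => ∑ k : Fin (d + 1), (b i).coeff k * (q : ℝ) ^ (k : ℕ)))
          = fun i => Polynomial.eval (q : ℝ) (Sum.elim (fun _ => Polynomial.C a) b i) by
        funext i; cases i with
        | inl i => simp
        | inr i => simp [hbi]]
      exact this.symm
    · rintro ⟨d, c, hc⟩
      refine ⟨fun i => ∑ k : Fin (d + 1), Polynomial.C (c i k) * Polynomial.X ^ (k : ℕ),
        fun j => ?_⟩
      apply Polynomial.eq_zero_of_infinite_isRoot
      apply Set.infinite_of_injective_forall_mem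
        (f := fun q : ℚ => (q : ℝ)) Rat.cast_injective
      intro q
      simp only [Set.mem_setOf_eq, Polynomial.IsRoot]
      rw [bridge_aux]
      rw [show (fun i => Polynomial.eval (q : ℝ)
            (Sum.elim (fun _ => Polynomial.C a)
              (fun i => ∑ k : Fin (d + 1), Polynomial.C (c i k) * Polynomial.X ^ (k : ℕ)) i))
          = Sum.elim (fun _ => a)
              (fun i => ∑ k : Fin (d + 1), c i k * (q : ℝ) ^ (k : ℕ)) by
        funext i; cases i with
        | inl i => simp
        | inr i => simp [Polynomial.eval_finset_sum]]
      exact hc j q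
  -- X as a countable union of sigma-compact images
  have hXsig : IsSigmaCompact X := by
    have : X = ⋃ d : ℕ, Prod.fst ''
        {p : ℝ × (Fin m → Fin (d + 1) → ℝ) | ∀ j : Fin r, ∀ q : ℚ,
          MvPolynomial.eval
            (Sum.elim (fun _ => p.1)
              (fun i => ∑ k : Fin (d + 1), p.2 i k * (q : ℝ) ^ (k : ℕ)))
            (MvPolynomial.map (Polynomial.evalRingHom (q : ℝ)) (F j)) = 0} := by
      ext a
      simp only [Set.mem_iUnion, Set.mem_image, Set.mem_setOf_eq, key]
      constructor
      · rintro ⟨d, c, hc⟩; exact ⟨d, (a, c), hc, rfl⟩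
      · rintro ⟨d, ⟨a', c⟩, hc, rfl⟩; exact ⟨d, c, hc⟩
    rw [this]
    apply isSigmaCompact_iUnion
    intro d
    apply IsSigmaCompact.image continuous_fst
    apply fun hcl => IsSigmaCompact.of_isClosed_subset isSigmaCompact_univ hcl (Set.subset_univ _)
    have : {p : ℝ × (Fin m → Fin (d + 1) → ℝ) | ∀ j : Fin r, ∀ q : ℚ,
          MvPolynomial.eval
            (Sum.elim (fun _ => p.1)
              (fun i => ∑ k : Fin (d + 1), p.2 i k * (q : ℝ) ^ (k : ℕ)))
            (MvPolynomial.map (Polynomial.evalRingHom (q : ℝ)) (F j)) = 0}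
        = ⋂ j : Fin r, ⋂ q : ℚ, (fun p : ℝ × (Fin m → Fin (d + 1) → ℝ) =>
          MvPolynomial.eval
            (Sum.elim (fun _ => p.1)
              (fun i => ∑ k : Fin (d + 1), p.2 i k * (q : ℝ) ^ (k : ℕ)))
            (MvPolynomial.map (Polynomial.evalRingHom (q : ℝ)) (F j))) ⁻¹' {0} := by
      ext p; simp [Set.mem_iInter]
    rw [this]
    refine isClosed_iInter fun j => isClosed_iInter fun q => IsClosed.preimage ?_ isClosed_singleton
    apply (MvPolynomial.continuous_eval _).comp
    apply continuous_pi
    intro i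
    cases i with
    | inl i => exact continuous_fst
    | inr i =>
      apply continuous_finset_sum
      intro k _
      fun_prop
  -- Baire category contradiction
  obtain ⟨K, hKc, hKU⟩ := hXsig
  have hcover : ⋃ i : ℕ ⊕ ℚ, (Sum.elim K (fun q : ℚ => ({(q : ℝ)} : Set ℝ)) i) = Set.univ := by
    ext x
    simp only [Set.mem_iUnion, Set.mem_univ, iff_true]
    by_cases hx : ∃ q : ℚ, x = (q : ℝ)
    · obtain ⟨q, rfl⟩ := hx; exact ⟨Sum.inr q, rfl⟩
    · have : x ∈ X := hx
      rw [← hKU] at this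
      obtain ⟨n, hn⟩ := Set.mem_iUnion.mp this
      exact ⟨Sum.inl n, hn⟩
  obtain ⟨i, hi⟩ := nonempty_interior_of_iUnion_of_closed
    (f := Sum.elim K (fun q : ℚ => ({(q : ℝ)} : Set ℝ)))
    (fun i => by cases i with
      | inl n => exact (hKc n).isClosed
      | inr q => exact isClosed_singleton) hcover
  cases i with
  | inr q => simp [interior_singleton] at hi
  | inl n =>
    obtain ⟨x, hx⟩ := hi
    obtain ⟨q', hqx⟩ := Rat.denseRange_cast.exists_mem_open isOpen_interior ⟨x, hx⟩
    have : (q' : ℝ) ∈ X := by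
      have h2 : (q' : ℝ) ∈ K n := interior_subset hqx
      rw [← hKU]; exact Set.mem_iUnion.mpr ⟨n, h2⟩
    exact this ⟨q', rfl⟩

/-- The set `ℝ − ℚ`, regarded as a set of constant polynomials in `ℝ[z]`,
is not Diophantine over `ℝ[z]`. -/
theorem real_sub_rat_not_diophantine :
    ¬ IsDiophantine1
      {f : Polynomial ℝ | ∃ a : ℝ, f = Polynomial.C a ∧ ¬ ∃ q : ℚ, a = (q : ℝ)} := by
  rintro ⟨m, r, F, hF⟩
  exact real_sub_rat_aux m r F hF
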